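/- For every U = (U_1,…,U_N) with U_i ∈ L²(ℝ^d, M_i), the reaction quadratic form satisfies ⟨LU,U⟩ = −(1/2) Σ_{i,j=1}^N k_{ij} η_j ∫∫ (U_i(v) − U_j(v'))² dM_j(v') dM_i(v); in particular ⟨LU,U⟩ ≤ 0. -/

import Mathlib

open Finset MeasureTheory

lemma aux_inner {α : Type*} [MeasurableSpace α] (ν : Measure α) [IsProbabilityMeasure ν]
    (g : α → ℝ) (hg : MemLp g 2 ν) (a : ℝ) :
    ∫ w, (a - g w) ^ 2 ∂ν = a ^ 2 - 2 * a * (∫ w, g w ∂ν) + ∫ w, (g w) ^ 2 ∂ν := by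
  have hg1 : Integrable g ν := hg.integrable one_le_two
  have hg2 : Integrable (fun w => (g w) ^ 2) ν := hg.integrable_sq
  have h : ∀ w, (a - g w) ^ 2 = a ^ 2 - (2 * a) * g w + (g w) ^ 2 := fun w => by ring
  have hi1 : Integrable (fun w => (2 * a) * g w) ν := hg1.const_mul _
  have hi : Integrable (fun w => a ^ 2 - (2 * a) * g w) ν := (integrable_const _).sub hi1
  simp_rw [h]
  rw [integral_add hi hg2, integral_sub (integrable_const _) hi1, integral_const_mul,
      integral_const]
  simp

lemma aux_mul {α β : Type*} [MeasurableSpace α] [MeasurableSpace β]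
    (μ : Measure α) (ν : Measure β) (f : α → ℝ) (g : β → ℝ) :
    ∫ v, ∫ w, g w * f v ∂ν ∂μ = (∫ w, g w ∂ν) * (∫ v, f v ∂μ) := by
  simp_rw [integral_mul_const]
  exact integral_const_mul _ _

lemma aux_double {α β : Type*} [MeasurableSpace α] [MeasurableSpace β]
    (μ : Measure α) (ν : Measure β) [IsProbabilityMeasure μ] [IsProbabilityMeasure ν]
    (f : α → ℝ) (g : β → ℝ) (hf : MemLp f 2 μ) (hg : MemLp g 2 ν) :
    ∫ v, ∫ w, (f v - g w) ^ 2 ∂ν ∂μ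
      = (∫ v, (f v) ^ 2 ∂μ) + (∫ w, (g w) ^ 2 ∂ν)
        - 2 * (∫ v, f v ∂μ) * (∫ w, g w ∂ν) := by
  have hf1 : Integrable f μ := hf.integrable one_le_two
  have hf2 : Integrable (fun v => (f v) ^ 2) μ := hf.integrable_sq
  simp_rw [aux_inner ν g hg]
  set G := ∫ w, g w ∂ν
  set C := ∫ w, (g w) ^ 2 ∂ν
  have h : ∀ v, f v ^ 2 - 2 * f v * G + C = f v ^ 2 - (2 * G) * f v + C := fun v => by ring
  have hi1 : Integrable (fun v => (2 * G) * f v) μ := hf1.const_mul _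
  have hi : Integrable (fun v => f v ^ 2 - (2 * G) * f v) μ := hf2.sub hi1
  simp_rw [h]
  rw [integral_add hi (integrable_const _), integral_sub hf2 hi1, integral_const_mul,
      integral_const]
  simp
  ring

/-- The reaction quadratic form identity and negative semi-definiteness:
`⟨LU,U⟩ = −(1/2) Σ_{i,j} k_{ij} η_j ∫∫ (U_i(v) − U_j(v'))² dM_j(v') dM_i(v) ≤ 0`. -/
theorem statement4
    (N d : ℕ) (hN : 2 ≤ N) (hd : 1 ≤ d)
    (k : Fin N → Fin N → ℝ) (hk : ∀ i j, 0 ≤ k i j)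
    (η : Fin N → ℝ) (hηpos : ∀ i, 0 < η i) (hηsum : ∑ i, η i = 1)
    (hηbal : ∀ i, ∑ j, (k i j * η j - k j i * η i) = 0)
    (M : Fin N → Measure (Fin d → ℝ))
    (hM : ∀ i, IsProbabilityMeasure (M i))
    (U : Fin N → (Fin d → ℝ) → ℝ)
    (hU : ∀ i, MemLp (U i) 2 (M i)) :
    ((∑ i, ∑ j, k i j * η j * ∫ v, ∫ w, U j w * U i v ∂(M j) ∂(M i))
        - ∑ i, ∑ j, k j i * η i * ∫ v, (U i v) ^ 2 ∂(M i)
      = -(1/2) * ∑ i, ∑ j, k i j * η j *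
          ∫ v, ∫ w, (U i v - U j w) ^ 2 ∂(M j) ∂(M i)) ∧
    ((∑ i, ∑ j, k i j * η j * ∫ v, ∫ w, U j w * U i v ∂(M j) ∂(M i))
        - ∑ i, ∑ j, k j i * η i * ∫ v, (U i v) ^ 2 ∂(M i) ≤ 0) := by
  have : ∀ i, IsProbabilityMeasure (M i) := hM
  set A : Fin N → ℝ := fun i => ∫ v, (U i v) ^ 2 ∂(M i) with hA
  set B : Fin N → ℝ := fun i => ∫ v, U i v ∂(M i) with hB
  have hmul : ∀ i j, (∫ v, ∫ w, U j w * U i v ∂(M j) ∂(M i)) = B j * B i :=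
    fun i j => aux_mul (M i) (M j) (U i) (U j)
  have hsq : ∀ i j, (∫ v, ∫ w, (U i v - U j w) ^ 2 ∂(M j) ∂(M i))
      = A i + A j - 2 * B i * B j :=
    fun i j => aux_double (M i) (M j) (U i) (U j) (hU i) (hU j)
  have key :
      (∑ i, ∑ j, k i j * η j * ∫ v, ∫ w, U j w * U i v ∂(M j) ∂(M i))
        - ∑ i, ∑ j, k j i * η i * ∫ v, (U i v) ^ 2 ∂(M i)
      = -(1/2) * ∑ i, ∑ j, k i j * η j *
          ∫ v, ∫ w, (U i v - U j w) ^ 2 ∂(M j) ∂(M i) := by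
    have hAi : ∀ i, (∫ v, (U i v) ^ 2 ∂(M i)) = A i := fun i => rfl
    simp_rw [hmul, hsq, hAi]
    have s1 : ∑ i, ∑ j, k i j * η j * A i = ∑ i, ∑ j, k j i * η i * A i := by
      refine Finset.sum_congr rfl fun i _ => ?_
      rw [← Finset.sum_mul, ← Finset.sum_mul]
      have hb : ∑ j, k i j * η j = ∑ j, k j i * η i := by
        have := hηbal i
        rw [Finset.sum_sub_distrib] at this
        linarith
      rw [hb]
    have s2 : ∑ i, ∑ j, k i j * η j * A j = ∑ i, ∑ j, k j i * η i * A i := by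
      rw [Finset.sum_comm]
    have expand : ∑ i, ∑ j, k i j * η j * (A i + A j - 2 * B i * B j)
        = (∑ i, ∑ j, k i j * η j * A i) + (∑ i, ∑ j, k i j * η j * A j)
          - ∑ i, ∑ j, k i j * η j * (2 * B i * B j) := by
      simp only [mul_add, mul_sub, Finset.sum_add_distrib, Finset.sum_sub_distrib]
    rw [expand, s1, s2]
    have e3 : ∑ i, ∑ j, k i j * η j * (B j * B i)
        = ∑ i, ∑ j, k i j * η j * (2 * B i * B j) / 2 := by
      refine Finset.sum_congr rfl fun i _ => Finset.sum_congr rfl fun j _ => by ring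
    rw [e3]
    simp_rw [← Finset.sum_div]
    ring
  refine ⟨key, ?_⟩
  rw [key]
  have hS : 0 ≤ ∑ i, ∑ j, k i j * η j *
      ∫ v, ∫ w, (U i v - U j w) ^ 2 ∂(M j) ∂(M i) := by
    refine Finset.sum_nonneg fun i _ => Finset.sum_nonneg fun j _ => ?_
    exact mul_nonneg (mul_nonneg (hk i j) (hηpos j).le)
      (integral_nonneg fun v => integral_nonneg fun w => sq_nonneg _)
  linarith
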